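/- If a homogeneous polynomial p of degree d lies in Δ(M), then for each i, the directional derivative (M_i · ∇)p equals minus the degree-(d-1) homogeneous component of the finite difference p(x - M_i) - p(x); in particular (M_i · ∇)p is free of x_i. -/

import Mathlib

open MvPolynomial

section Aux

variable {K : Type*} {n : ℕ}

lemma my_coeff_pderiv [CommRing K] (i : Fin n) (p : MvPolynomial (Fin n) K) (m : Fin n →₀ ℕ) :
    coeff m (pderiv i p) = (m i + 1) * coeff (m + Finsupp.single i 1) p := by
  classical
  induction p using MvPolynomial.induction_on' with
  | monomial s a =>
    rw [pderiv_monomial]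
    rcases Nat.eq_zero_or_pos (s i) with h | h
    · have hne : s ≠ m + Finsupp.single i 1 := by
        intro hs; rw [hs] at h; simp at h
      simp [coeff_monomial, hne, h]
    · have key : (s - Finsupp.single i 1 = m) ↔ (s = m + Finsupp.single i 1) := by
        constructor
        · intro hs
          ext j
          have h2 := DFunLike.congr_fun hs j
          simp only [Finsupp.sub_apply, Finsupp.single_apply, Finsupp.coe_tsub,
            Pi.sub_apply] at h2
          simp only [Finsupp.add_apply, Finsupp.single_apply]
          by_cases hj : i = j
          · subst hj; simp at h2 ⊢; omega
          · simp only [if_neg hj] at h2 ⊢; omega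
        · intro hs; subst hs; ext j; simp [Finsupp.single_apply]
      simp only [coeff_monomial]
      split_ifs with h1 h2 h2
      · have : s i = m i + 1 := by subst h2; simp
        rw [this]; push_cast; ring
      · exact absurd (key.1 h1) h2
      · exact absurd (key.2 h2) h1
      · ring
  | add p q hp hq => simp [hp, hq, mul_add]

lemma my_pderiv_comm [CommRing K] (i j : Fin n) (p : MvPolynomial (Fin n) K) :
    pderiv i (pderiv j p) = pderiv j (pderiv i p) := by
  ext m
  simp only [my_coeff_pderiv, Finsupp.add_apply, Finsupp.single_apply]
  rw [show m + Finsupp.single i 1 + Finsupp.single j 1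
      = m + Finsupp.single j 1 + Finsupp.single i 1 by abel]
  by_cases h : i = j
  · subst h; ring
  · have h' : ¬ (j = i) := fun hji => h hji.symm
    simp only [if_neg h, if_neg h']
    push_cast
    ring

lemma degree_add_single (m : Fin n →₀ ℕ) (i : Fin n) :
    (m + Finsupp.single i 1).degree = m.degree + 1 := by
  classical
  rw [Finsupp.degree_eq_weight_one, map_add]
  congr 1
  simp [Finsupp.weight_apply, Finsupp.sum_single_index]

lemma degree_single_one (i : Fin n) : (Finsupp.single i 1 : Fin n →₀ ℕ).degree = 1 := by
  simpa using degree_add_single (0 : Fin n →₀ ℕ) i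

variable [Field K] [CharZero K]

lemma coeff_add_single_eq_zero {i : Fin n} {q : MvPolynomial (Fin n) K}
    (h : pderiv i q = 0) (m : Fin n →₀ ℕ) :
    coeff (m + Finsupp.single i 1) q = 0 := by
  have h1 : ((m i : K) + 1) * coeff (m + Finsupp.single i 1) q = 0 := by
    rw [← my_coeff_pderiv, h, coeff_zero]
  have h2 : ((m i : K) + 1) ≠ 0 := by
    have : ((m i : K) + 1) = ((m i + 1 : ℕ) : K) := by push_cast; ring
    rw [this]
    exact Nat.cast_ne_zero.mpr (Nat.succ_ne_zero _)
  exact (mul_eq_zero.mp h1).resolve_left h2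

lemma eq_zero_of_pderiv_eq_zero {q : MvPolynomial (Fin n) K}
    (hq : ∀ k, pderiv k q = 0) (h0 : coeff 0 q = 0) : q = 0 := by
  ext m
  rcases eq_or_ne m 0 with rfl | hm
  · simpa using h0
  · obtain ⟨k, hk⟩ : ∃ k, m k ≠ 0 := by
      by_contra h
      push_neg at h
      exact hm (Finsupp.ext fun j => h j)
    have hrep : m = (m - Finsupp.single k 1) + Finsupp.single k 1 := by
      ext j
      simp only [Finsupp.add_apply, Finsupp.sub_apply, Finsupp.single_apply,
        Finsupp.coe_tsub, Pi.sub_apply]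
      by_cases hj : k = j
      · subst hj; simp; omega
      · simp [hj]
    rw [hrep, coeff_add_single_eq_zero (hq k), coeff_zero]

lemma pderiv_homogeneousComponent_eq_zero {i : Fin n} {q : MvPolynomial (Fin n) K}
    (h : pderiv i q = 0) (k : ℕ) :
    pderiv i (homogeneousComponent k q) = 0 := by
  ext m
  rw [my_coeff_pderiv, coeff_homogeneousComponent]
  split_ifs with hd
  · rw [coeff_add_single_eq_zero h]; simp
  · simp

omit [CharZero K] in
lemma pderiv_homogeneousComponent_succ (i : Fin n) (q : MvPolynomial (Fin n) K) (k : ℕ) :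
    pderiv i (homogeneousComponent (k + 1) q) = homogeneousComponent k (pderiv i q) := by
  ext m
  rw [my_coeff_pderiv, coeff_homogeneousComponent, coeff_homogeneousComponent,
    my_coeff_pderiv, degree_add_single]
  by_cases hd : m.degree = k
  · rw [if_pos (by omega), if_pos hd]
  · rw [if_neg (by omega), if_neg hd, mul_zero]

omit [CharZero K] in
lemma pderiv_aeval_sub (c : Fin n → K) (k : Fin n) (p : MvPolynomial (Fin n) K) :
    pderiv k (aeval (fun j => X j - C (c j)) p)
      = aeval (fun j => X j - C (c j)) (pderiv k p) := by
  induction p using MvPolynomial.induction_on with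
  | C a => simp
  | add p q hp hq => simp only [map_add, hp, hq]
  | mul_X p j hp =>
    simp only [map_mul, aeval_X, pderiv_mul, hp, map_add]
    by_cases h : k = j
    · subst h; simp [pderiv_X]
    · simp [pderiv_X, Pi.single_apply, h]

omit [CharZero K] in
lemma isHomogeneous_pderiv {p : MvPolynomial (Fin n) K} {d : ℕ}
    (hp : p.IsHomogeneous (d + 1)) (k : Fin n) :
    (pderiv k p).IsHomogeneous d := by
  intro m hm
  rw [my_coeff_pderiv] at hm
  have h2 : coeff (m + Finsupp.single k 1) p ≠ 0 := by
    intro h; rw [h, mul_zero] at hm; exact hm rfl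
  have h3 := hp h2
  rw [show (Finsupp.weight (1 : Fin n → ℕ)) = Finsupp.degree from
    Finsupp.degree_eq_weight_one.symm] at h3 ⊢
  rw [degree_add_single] at h3
  omega

omit [CharZero K] in
lemma isHomogeneous_one_rep {p : MvPolynomial (Fin n) K} (hp : p.IsHomogeneous 1) :
    p = ∑ j : Fin n, C (coeff (Finsupp.single j 1) p) * X j := by
  classical
  have hdeg1 : ∀ m : Fin n →₀ ℕ, m.degree = 1 → ∃ j, m = Finsupp.single j 1 := by
    intro m hm
    have hm0 : m ≠ 0 := by
      intro h; rw [h] at hm; simp at hm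
    obtain ⟨j, hj⟩ : ∃ j, m j ≠ 0 := by
      by_contra h; push_neg at h; exact hm0 (Finsupp.ext fun j => h j)
    refine ⟨j, ?_⟩
    have hle := Finsupp.le_degree j m
    have hmj : m j = 1 := by omega
    ext j'
    rcases eq_or_ne j' j with rfl | hne
    · simp [hmj]
    · simp only [Finsupp.single_apply, if_neg (fun h : j = j' => hne h.symm)]
      by_contra h
      have hj' : m j' ≠ 0 := h
      have hsub : ({j, j'} : Finset (Fin n)) ⊆ m.support := by
        intro x hx
        simp only [Finset.mem_insert, Finset.mem_singleton] at hx
        rcases hx with rfl | rfl <;> simp [Finsupp.mem_support_iff, hj, hj']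
      have hs := Finset.sum_le_sum_of_subset hsub (f := fun x => m x)
      rw [Finset.sum_pair (fun h => hne h.symm)] at hs
      have : m j + m j' ≤ m.degree := hs
      omega
  ext m
  rw [coeff_sum]
  simp only [coeff_C_mul, coeff_X']
  by_cases hd : m.degree = 1
  · obtain ⟨j, rfl⟩ := hdeg1 m hd
    rw [Finset.sum_eq_single j]
    · rw [if_pos rfl, mul_one]
    · intro b _ hb
      rw [if_neg, mul_zero]
      intro h
      exact hb (Finsupp.single_left_injective one_ne_zero h)
    · intro h; simp at h
  · rw [hp.coeff_eq_zero hd]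
    refine (Finset.sum_eq_zero ?_).symm
    intro j _
    rw [if_neg, mul_zero]
    intro h
    rw [← h, degree_single_one] at hd
    exact hd rfl

lemma key_lemma (c : Fin n → K) :
    ∀ d (p : MvPolynomial (Fin n) K), p.IsHomogeneous d →
      homogeneousComponent (d - 1) (aeval (fun j => X j - C (c j)) p - p)
        = -∑ j, c j • pderiv j p := by
  intro d
  induction d with
  | zero =>
    intro p hp
    have h0 : p = C (coeff 0 p) := by
      ext m
      rcases eq_or_ne m 0 with rfl | hm
      · simp
      · rw [hp.coeff_eq_zero (by simpa [Finsupp.degree_eq_zero_iff] using hm),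
          coeff_C, if_neg (fun h => hm h.symm)]
    rw [h0]
    simp
  | succ d ih =>
    intro p hp
    have hgoal : homogeneousComponent d (aeval (fun j => X j - C (c j)) p - p)
        = -∑ j, c j • pderiv j p → homogeneousComponent (d + 1 - 1)
          (aeval (fun j => X j - C (c j)) p - p) = -∑ j, c j • pderiv j p := by
      intro h; simpa using h
    apply hgoal
    rcases Nat.eq_zero_or_pos d with rfl | hd
    · -- degree 1 case
      have hrep := isHomogeneous_one_rep hp
      have hterm : ∀ j : Fin n,
          C (coeff (Finsupp.single j 1) p) * (X j - C (c j))
            - C (coeff (Finsupp.single j 1) p) * X j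
          = C (-(coeff (Finsupp.single j 1) p * c j)) := by
        intro j; rw [map_neg, map_mul]; ring
      have hL : aeval (fun j => X j - C (c j)) p - p
          = C (∑ j, -(coeff (Finsupp.single j 1) p * c j)) := by
        conv_lhs => rw [hrep]
        rw [map_sum, ← Finset.sum_sub_distrib, map_sum]
        apply Finset.sum_congr rfl
        intro j _
        rw [← hterm j, map_mul, aeval_X, aeval_C, MvPolynomial.algebraMap_eq]
      have hderiv : ∀ j : Fin n,
          pderiv j p = C (coeff (Finsupp.single j 1) p) := by
        intro j
        conv_lhs => rw [hrep]
        rw [map_sum, Finset.sum_eq_single j]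
        · rw [pderiv_mul, pderiv_C, pderiv_X_self, mul_one, zero_mul, zero_add]
        · intro b _ hb
          rw [pderiv_mul, pderiv_C, pderiv_X_of_ne (fun h : b = j => hb h),
            mul_zero, zero_mul, zero_add]
        · intro h; simp at h
      have hR : ∑ j, c j • pderiv j p = ∑ j, C (c j * coeff (Finsupp.single j 1) p) := by
        apply Finset.sum_congr rfl
        intro j _
        rw [hderiv j, smul_eq_C_mul, ← map_mul]
      rw [hL, hR, homogeneousComponent_zero, ← map_sum, ← map_neg]
      have hc : coeff (0 : Fin n →₀ ℕ) (C (∑ j, -(coeff (Finsupp.single j 1) p * c j))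
          : MvPolynomial (Fin n) K) = ∑ j, -(coeff (Finsupp.single j 1) p * c j) := by
        rw [coeff_C, if_pos rfl]
      rw [hc]
      congr 1
      rw [← Finset.sum_neg_distrib]
      apply Finset.sum_congr rfl
      intro j _
      ring
    · -- degree ≥ 2 case
      set σp := aeval (fun j => X j - C (c j)) p with hσ
      have hqz : homogeneousComponent d (σp - p) + ∑ j, c j • pderiv j p = 0 := by
        apply eq_zero_of_pderiv_eq_zero
        · intro k
          rw [map_add]
          have hshift : pderiv k (homogeneousComponent d (σp - p))
              = homogeneousComponent (d - 1) (pderiv k (σp - p)) := by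
            obtain ⟨e, he⟩ : ∃ e, d = e + 1 := ⟨d - 1, by omega⟩
            rw [he, pderiv_homogeneousComponent_succ]
            congr 1
          have hD : pderiv k (σp - p)
              = aeval (fun j => X j - C (c j)) (pderiv k p) - pderiv k p := by
            rw [map_sub, hσ, pderiv_aeval_sub]
          rw [hshift, hD, ih (pderiv k p) (isHomogeneous_pderiv hp k)]
          have hswap : pderiv k (∑ j, c j • pderiv j p)
              = ∑ j, c j • pderiv j (pderiv k p) := by
            rw [map_sum]
            apply Finset.sum_congr rfl
            intro j _
            rw [Derivation.map_smul, my_pderiv_comm k j]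
          rw [hswap]
          exact neg_add_cancel _
        · rw [coeff_add, coeff_homogeneousComponent,
            if_neg (by simp only [map_zero]; omega), coeff_sum, zero_add]
          apply Finset.sum_eq_zero
          intro j _
          rw [coeff_smul, my_coeff_pderiv, hp.coeff_eq_zero
            (by rw [degree_add_single, map_zero]; omega), mul_zero, smul_zero]
      exact eq_neg_of_add_eq_zero_left hqz

end Aux

theorem directional_derivative_of_homogeneous_mem_deltaSpace
    {K : Type*} [Field K] [CharZero K] {n : ℕ}
    (M : Matrix (Fin n) (Fin n) K) (p : MvPolynomial (Fin n) K) (d : ℕ)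
    (hp : p.IsHomogeneous d)
    (hmem : ∀ i, pderiv i (aeval (fun j => X j - C (M i j)) p - p) = 0)
    (i : Fin n) :
    (∑ j, M i j • pderiv j p) =
      - homogeneousComponent (d - 1) (aeval (fun j => X j - C (M i j)) p - p) ∧
    pderiv i (∑ j, M i j • pderiv j p) = 0 := by
  have hkey := key_lemma (fun j => M i j) d p hp
  have h1 : (∑ j, M i j • pderiv j p) =
      - homogeneousComponent (d - 1) (aeval (fun j => X j - C (M i j)) p - p) := by
    rw [hkey, neg_neg]
  refine ⟨h1, ?_⟩
  rw [h1, map_neg, pderiv_homogeneousComponent_eq_zero (hmem i), neg_zero]
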